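/- Let R be a commutative ring, M a Lucas R-module, and A a submodule of an R-module B such that B/A is 𝒬-torsion. Then every R-homomorphism f : A → M extends to an R-homomorphism g : B → M (i.e., g restricted to A equals f). -/

import Mathlib

open CategoryTheory

universe u

/-- An ideal is dense if its annihilator in `R` is zero. -/
def Ideal.IsDense {R : Type u} [CommRing R] (I : Ideal R) : Prop :=
  ∀ r : R, (∀ a ∈ I, a * r = 0) → r = 0

/-- An ideal is semi-regular if it contains a finitely generated dense subideal. -/
def Ideal.IsSemiRegular {R : Type u} [CommRing R] (I : Ideal R) : Prop :=
  ∃ J : Ideal R, J ≤ I ∧ J.FG ∧ J.IsDense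

/-- Membership in `𝒬`: finitely generated semi-regular ideals. -/
def Ideal.IsInQ {R : Type u} [CommRing R] (I : Ideal R) : Prop :=
  I.FG ∧ I.IsSemiRegular

/-- An `R`-module is `𝒬`-torsion if every element is annihilated by some `I ∈ 𝒬`. -/
def IsQTorsion (R : Type u) [CommRing R] (M : Type u) [AddCommGroup M] [Module R M] : Prop :=
  ∀ x : M, ∃ I : Ideal R, I.IsInQ ∧ ∀ a ∈ I, a • x = 0

/-- An `R`-module is `𝒬`-torsion-free if no nonzero element is annihilated by any `I ∈ 𝒬`. -/
def IsQTorsionFree (R : Type u) [CommRing R] (M : Type u) [AddCommGroup M] [Module R M] : Prop :=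
  ∀ x : M, (∃ I : Ideal R, I.IsInQ ∧ ∀ a ∈ I, a • x = 0) → x = 0

/-- `Ext¹_R(A, B) = 0`. -/
def Ext1Vanishes (R : Type u) [CommRing R] (A B : Type u) [AddCommGroup A] [Module R A]
    [AddCommGroup B] [Module R B] : Prop :=
  Subsingleton (((Ext R (ModuleCat.{u} R) 1).obj (Opposite.op (ModuleCat.of R A))).obj
    (ModuleCat.of R B))

/-- A Lucas module is a `𝒬`-torsion-free module `M` with `Ext¹_R(R/I, M) = 0` for all `I ∈ 𝒬`. -/
def IsLucasModule (R : Type u) [CommRing R] (M : Type u) [AddCommGroup M] [Module R M] : Prop :=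
  IsQTorsionFree R M ∧ ∀ I : Ideal R, I.IsInQ → Ext1Vanishes R (R ⧸ I) M

section AuxResolution
open Category Limits Projective

noncomputable section
variable {C : Type*} [Category C] [Abelian C] [EnoughProjectives C]

def myOfComplex {P Z : C} (p : P ⟶ Z) [Epi p] : ChainComplex C ℕ :=
  ChainComplex.mk' P (Projective.syzygies p) (Projective.d p)
    (fun f => ⟨_, Projective.d f, (Category.assoc _ _ _).trans ((congrArg _ (kernel.condition f)).trans comp_zero)⟩)

lemma myOfComplex_d_1_0 {P Z : C} (p : P ⟶ Z) [Epi p] :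
    (myOfComplex p).d 1 0 = d p := by
  simp [myOfComplex]

lemma myOfComplex_exactAt_succ {P Z : C} (p : P ⟶ Z) [Epi p] (n : ℕ) :
    (myOfComplex p).ExactAt (n + 1) := by
  rw [HomologicalComplex.exactAt_iff' _ (n + 1 + 1) (n + 1) n (by simp) (by simp)]
  refine (ShortComplex.exact_iff_of_iso ?_).1 (exact_d_f ((myOfComplex p).d (n + 1) n))
  refine ShortComplex.isoMk (ChainComplex.mk'XIso P (Projective.syzygies p) (Projective.d p)
    (fun f => ⟨_, Projective.d f, (Category.assoc _ _ _).trans ((congrArg _ (kernel.condition f)).trans comp_zero)⟩) n).symm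
    (Iso.refl _) (Iso.refl _) ?_ ?_
  · simp only [Iso.symm_hom, Iso.refl_hom]
    refine (Iso.inv_comp_eq _).2 ((ChainComplex.mk'_d P (Projective.syzygies p) (Projective.d p)
      (fun f => ⟨_, Projective.d f, (Category.assoc _ _ _).trans ((congrArg _ (kernel.condition f)).trans comp_zero)⟩) n).trans (congrArg (fun t => _ ≫ t) (Category.comp_id _).symm))
  · simp only [Iso.refl_hom]
    exact (Category.id_comp ((myOfComplex p).d (n + 1) n)).trans (Category.comp_id _).symm

instance myOfComplex_projective {P Z : C} (p : P ⟶ Z) [Epi p] [Projective P] (n : ℕ) :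
    Projective ((myOfComplex p).X n) := by
  obtain (_ | _ | _ | n) := n
  · exact ‹Projective P›
  all_goals apply Projective.projective_over

def myRes {P Z : C} (p : P ⟶ Z) [Epi p] [Projective P] : ProjectiveResolution Z where
  complex := myOfComplex p
  π := (ChainComplex.toSingle₀Equiv _ _).symm ⟨p, by
          rw [myOfComplex_d_1_0]; exact (assoc _ _ _).trans ((congrArg _ (kernel.condition p)).trans comp_zero)⟩
  quasiIso := ⟨fun n => by
    cases n
    · rw [ChainComplex.quasiIsoAt₀_iff, ShortComplex.quasiIso_iff_of_zeros']
      · refine (ShortComplex.exact_and_epi_g_iff_of_iso ?_).2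
          ⟨exact_d_f p, by dsimp; infer_instance⟩
        exact ShortComplex.isoMk (Iso.refl _) (Iso.refl _) (Iso.refl _)
          (by simp only [Iso.refl_hom]; exact ((Category.id_comp (d p)).trans (myOfComplex_d_1_0 p).symm).trans (Category.comp_id ((myOfComplex p).d 1 0)).symm)
          (by simp only [Iso.refl_hom]; exact (Category.id_comp p).trans ((ChainComplex.toSingle₀Equiv_symm_apply_f_zero (C := myOfComplex p) (X := Z) p _).symm.trans (Category.comp_id _).symm))
      all_goals rfl
    · rw [quasiIsoAt_iff_exactAt']
      · apply myOfComplex_exactAt_succ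
      · apply ChainComplex.exactAt_succ_single_obj⟩

lemma myRes_complex_d_1_0 {P Z : C} (p : P ⟶ Z) [Epi p] [Projective P] :
    (myRes p).complex.d 1 0 = d p := myOfComplex_d_1_0 p

lemma myRes_pi_f_zero {P Z : C} (p : P ⟶ Z) [Epi p] [Projective P] :
    (myRes p).π.f 0 = p := by
  exact ChainComplex.toSingle₀Equiv_symm_apply_f_zero _ _

end

/-- Baer-type property from vanishing of Ext¹. -/
lemma ext1_baer {R : Type u} [CommRing R] {M : Type u} [AddCommGroup M] [Module R M]
    (I : Ideal R) (hext : Ext1Vanishes R (R ⧸ I) M) (φ : I →ₗ[R] M) :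
    ∃ m : M, ∀ (a : R) (ha : a ∈ I), φ ⟨a, ha⟩ = a • m := by
  classical
  let p : ModuleCat.of R R ⟶ ModuleCat.of R (R ⧸ I) := ModuleCat.ofHom I.mkQ
  haveI : Epi p := (ModuleCat.epi_iff_surjective p).mpr (Submodule.mkQ_surjective I)
  haveI : Projective (ModuleCat.of R R) :=
    ModuleCat.projective_of_free (Module.Basis.singleton (PUnit : Type u) R)
  let P : ProjectiveResolution (ModuleCat.of R (R ⧸ I)) := myRes p
  haveI : Subsingleton (((Ext R (ModuleCat.{u} R) 1).obj
      (Opposite.op (ModuleCat.of R (R ⧸ I)))).obj (ModuleCat.of R M)) := hext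
  have hsub : Subsingleton ((P.complex.linearYonedaObj R (ModuleCat.of R M)).homology 1) := by
    have e := (P.isoExt (R := R) 1 (ModuleCat.of R M)).toLinearEquiv
    exact Equiv.subsingleton e.symm.toEquiv
  have hZero := @ModuleCat.isZero_of_subsingleton R _
    ((P.complex.linearYonedaObj R (ModuleCat.of R M)).homology 1) hsub
  have hex : (P.complex.linearYonedaObj R (ModuleCat.of R M)).ExactAt 1 :=
    (HomologicalComplex.exactAt_iff_isZero_homology _ _).2 hZero
  rw [HomologicalComplex.exactAt_iff' _ 0 1 2 (by simp) (by simp)] at hex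
  rw [ShortComplex.moduleCat_exact_iff] at hex
  have hmem : ∀ y : P.complex.X 1, (P.complex.d 1 0) y ∈ I := by
    intro y
    have h0 : P.complex.d 1 0 ≫ P.π.f 0 = 0 := P.complex_d_comp_π_f_zero
    have h1 := congrFun (congrArg (fun (f : P.complex.X 1 ⟶ ModuleCat.of R (R ⧸ I)) => (f : P.complex.X 1 → R ⧸ I)) h0) y
    have h2 : I.mkQ ((P.complex.d 1 0) y) = 0 := by
      rw [myRes_pi_f_zero] at h1
      exact h1
    exact (Submodule.Quotient.mk_eq_zero I).1 h2
  -- the cocycle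
  let ψ : P.complex.X 1 ⟶ ModuleCat.of R M :=
    ModuleCat.ofHom (φ ∘ₗ (LinearMap.codRestrict I (P.complex.d 1 0).hom hmem))
  obtain ⟨g, hg⟩ := hex ψ (by
    show P.complex.d 2 1 ≫ ψ = 0
    ext z
    show φ (⟨(P.complex.d 1 0) ((P.complex.d 2 1) z), _⟩ : I) = 0
    have hdd : (P.complex.d 1 0) ((P.complex.d 2 1) z) = 0 := by
      have h0 : P.complex.d 2 1 ≫ P.complex.d 1 0 = 0 := P.complex.d_comp_d 2 1 0
      exact congrFun (congrArg (fun (f : P.complex.X 2 ⟶ ModuleCat.of R R) =>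
        (f : P.complex.X 2 → R)) h0) z
    have hz0 : (⟨(P.complex.d 1 0) ((P.complex.d 2 1) z),
        hmem ((P.complex.d 2 1) z)⟩ : I) = 0 := Subtype.ext hdd
    rw [hz0, map_zero])
  -- g : Hom(R, M); set m := g 1
  let g' : R →ₗ[R] M := g.hom
  refine ⟨g' (1 : R), fun a ha => ?_⟩
  -- surjectivity of d 1 0 onto I
  have hex0 := P.exact₀
  rw [ShortComplex.moduleCat_exact_iff] at hex0
  have hpa : (P.π.f 0) (a : ModuleCat.of R R) = 0 := by
    rw [myRes_pi_f_zero]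
    show I.mkQ a = 0
    rw [Submodule.mkQ_apply, Submodule.Quotient.mk_eq_zero]
    exact ha
  obtain ⟨y, hy⟩ := hex0 a hpa
  have hψy : ψ y = φ ⟨a, ha⟩ := by
    show φ (⟨(P.complex.d 1 0) y, hmem y⟩ : I) = φ ⟨a, ha⟩
    congr 1
    exact Subtype.ext hy
  have hgy' : P.complex.d 1 0 ≫ g = ψ := hg
  have hgy2 := congrFun (congrArg (fun (f : P.complex.X 1 ⟶ ModuleCat.of R M) =>
    (f : P.complex.X 1 → M)) hgy') y
  dsimp at hgy2
  rw [← hψy, ← hgy2]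
  have hya : (P.complex.d 1 0) y = (a : R) := hy
  show g' ((P.complex.d 1 0) y) = a • g' 1
  rw [hya]
  show g' a = a • g' 1
  conv_lhs => rw [show a = a • (1 : R) by simp]
  rw [map_smul]


end AuxResolution

section Key

variable {R : Type u} [CommRing R] {M : Type u} [AddCommGroup M] [Module R M]
  {B : Type u} [AddCommGroup B] [Module R B]

/-- The linear map `J → M`, `r ↦ p (r • x)`, for `J = {r | r • x ∈ p.domain}`. -/
def idealTo (p : B →ₗ.[R] M) (x : B) :
    (Submodule.comap (LinearMap.toSpanSingleton R B x) p.domain : Ideal R) →ₗ[R] M where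
  toFun j := p.toFun ⟨(j : R) • x, j.2⟩
  map_add' j k := by
    rw [← map_add]
    exact congrArg p.toFun (Subtype.ext (by
      show ((j : R) + (k : R)) • x = (j : R) • x + (k : R) • x
      rw [add_smul]))
  map_smul' r j := by
    rw [← LinearMap.map_smul]
    exact congrArg p.toFun (Subtype.ext (by
      show (r * (j : R)) • x = r • ((j : R) • x)
      rw [mul_smul]))

lemma key_ext (hM : IsLucasModule R M) (p : B →ₗ.[R] M) (x : B)
    (I : Ideal R) (hIQ : I.IsInQ) (hIx : ∀ a ∈ I, a • x ∈ p.domain) :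
    ∃ m : M, ∀ (r : R) (hr : r • x ∈ p.domain), p ⟨r • x, hr⟩ = r • m := by
  classical
  set J : Ideal R := Submodule.comap (LinearMap.toSpanSingleton R B x) p.domain with hJ
  have hmemJ : ∀ r : R, r ∈ J ↔ r • x ∈ p.domain := by
    intro r
    rw [hJ, Submodule.mem_comap, LinearMap.toSpanSingleton_apply]
  have hIJ : I ≤ J := fun a ha => (hmemJ a).2 (hIx a ha)
  obtain ⟨m, hm⟩ := ext1_baer I (hM.2 I hIQ) ((idealTo p x) ∘ₗ Submodule.inclusion hIJ)
  have hφ : ∀ (r : R) (hr : r ∈ J), idealTo p x ⟨r, hr⟩ = r • m := by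
    intro r hr
    have h0 : idealTo p x ⟨r, hr⟩ - r • m = 0 := by
      apply hM.1 _ ⟨I, hIQ, ?_⟩
      intro b hb
      have e1 : (b • (⟨r, hr⟩ : J)) = (⟨b * r, Ideal.mul_mem_left J b hr⟩ : J) :=
        Subtype.ext (by simp)
      have h1 : b • idealTo p x ⟨r, hr⟩ = idealTo p x ⟨b * r, Ideal.mul_mem_left J b hr⟩ := by
        rw [← LinearMap.map_smul, e1]
      have h2 : idealTo p x ⟨b * r, Ideal.mul_mem_left J b hr⟩
          = r • idealTo p x ⟨b, hIJ hb⟩ := by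
        show p.toFun ⟨(b * r) • x, _⟩ = r • p.toFun ⟨b • x, _⟩
        rw [← LinearMap.map_smul]
        congr 1
        exact Subtype.ext (by show (b * r) • x = r • (b • x); rw [mul_comm, mul_smul])
      have h3 : idealTo p x ⟨b, hIJ hb⟩ = b • m := hm b hb
      rw [smul_sub, h1, h2, h3, smul_comm r b m, ← smul_sub, sub_self, smul_zero]
    exact sub_eq_zero.1 h0
  exact ⟨m, fun r hr => hφ r ((hmemJ r).2 hr)⟩

lemma key_step (hM : IsLucasModule R M) (p : B →ₗ.[R] M) (x : B) (hx : x ∉ p.domain)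
    (I : Ideal R) (hIQ : I.IsInQ) (hIx : ∀ a ∈ I, a • x ∈ p.domain) :
    ∃ q : B →ₗ.[R] M, p ≤ q ∧ x ∈ q.domain := by
  obtain ⟨m, hm⟩ := key_ext hM p x I hIQ hIx
  have H : ∀ c : R, c • x = 0 → c • m = 0 := by
    intro c hc
    have hcd : c • x ∈ p.domain := by rw [hc]; exact p.domain.zero_mem
    have := hm c hcd
    rw [← this]
    have h0 : (⟨c • x, hcd⟩ : p.domain) = 0 := Subtype.ext hc
    rw [h0]
    exact p.map_zero
  set g := LinearPMap.mkSpanSingleton' (σ := RingHom.id R) x m H with hg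
  have Hcompat : ∀ (u : p.domain) (v : g.domain), (u : B) = v → p u = g v := by
    intro u v huv
    have hv : (v : B) ∈ Submodule.span R {x} := v.2
    obtain ⟨c, hc⟩ := Submodule.mem_span_singleton.1 hv
    have hcu : c • x ∈ p.domain := by rw [hc, ← huv]; exact u.2
    have h1 : p u = c • m := by
      have : u = ⟨c • x, hcu⟩ := Subtype.ext (by rw [huv, ← hc])
      rw [this]
      exact hm c hcu
    have h2 : g v = c • m := by
      have hv' : v = ⟨c • x, by rw [hc]; exact v.2⟩ := Subtype.ext hc.symm
      rw [hv']
      exact LinearPMap.mkSpanSingleton'_apply x m H c _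
    rw [h1, h2]
  refine ⟨p.sup g Hcompat, p.left_le_sup g Hcompat, ?_⟩
  show x ∈ (p.sup g Hcompat).domain
  rw [LinearPMap.domain_sup]
  exact Submodule.mem_sup_right
    (by rw [hg, LinearPMap.domain_mkSpanSingleton]; exact Submodule.mem_span_singleton_self x)

end Key

/-- If `M` is a Lucas module, `A ≤ B` with `B/A` `𝒬`-torsion, then every
homomorphism `f : A → M` extends to a homomorphism `g : B → M`. -/
theorem lucas_extension_property (R : Type u) [CommRing R]
    (M : Type u) [AddCommGroup M] [Module R M] (hM : IsLucasModule R M)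
    (B : Type u) [AddCommGroup B] [Module R B] (A : Submodule R B)
    (hBA : IsQTorsion R (B ⧸ A)) (f : A →ₗ[R] M) :
    ∃ g : B →ₗ[R] M, ∀ a : A, g (a : B) = f a := by
  classical
  set S : Set (B →ₗ.[R] M) :=
    {p | ∃ h : A ≤ p.domain, ∀ a : A, p ⟨(a : B), h a.2⟩ = f a} with hS
  have hp₀ : (⟨A, f⟩ : B →ₗ.[R] M) ∈ S := ⟨le_rfl, fun a => rfl⟩
  obtain ⟨p, -, hpS, hpmax⟩ := zorn_le_nonempty₀ S (fun c hcS hc y hy => by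
    have dir : DirectedOn (· ≤ ·) c := hc.directedOn
    refine ⟨LinearPMap.sSup c dir, ?_, fun z hz => LinearPMap.le_sSup dir hz⟩
    obtain ⟨hy1, hy2⟩ := hcS hy
    have hle := LinearPMap.le_sSup dir hy
    refine ⟨le_trans hy1 hle.1, fun a => ?_⟩
    rw [← hy2 a]
    exact (hle.2 rfl).symm) _ hp₀
  -- the maximal element has full domain
  have hdom : p.domain = ⊤ := by
    by_contra hne
    obtain ⟨x, hx⟩ : ∃ x : B, x ∉ p.domain := by
      by_contra h
      push_neg at h
      exact hne (Submodule.eq_top_iff'.2 h)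
    obtain ⟨I, hIQ, hIann⟩ := hBA (Submodule.Quotient.mk x)
    have hIx : ∀ a ∈ I, a • x ∈ p.domain := by
      intro a ha
      have := hIann a ha
      rw [← Submodule.Quotient.mk_smul, Submodule.Quotient.mk_eq_zero] at this
      exact hpS.1 this
    obtain ⟨q, hpq, hxq⟩ := key_step hM p x hx I hIQ hIx
    have hqS : q ∈ S := by
      refine ⟨le_trans hpS.1 hpq.1, fun a => ?_⟩
      rw [← hpS.2 a]
      exact (hpq.2 rfl).symm
    have := (hpmax hqS hpq).1 hxq
    exact hx this
  refine ⟨{ toFun := fun b => p ⟨b, by rw [hdom]; trivial⟩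
            map_add' := fun u v => by rw [← LinearPMap.map_add]; rfl
            map_smul' := fun r u => by rw [← LinearPMap.map_smul]; rfl }, fun a => ?_⟩
  show p ⟨(a : B), _⟩ = f a
  rw [← hpS.2 a]
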